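/- M'_k(d) ≤ M_k(d) for all k, d ≥ 1: given any partition k = k_1 + … + k_s and d = d_1 + … + d_s, and k_i-distance sets S_i ⊂ ℝ^{d_i} of cardinality m_{k_i}(d_i), for every ε > 0 one can scale the sets so that the product set S_1 × … × S_s ⊂ ℝ^d is an ε-nearly k-distance set of cardinality ∏ m_{k_i}(d_i). -/

import Mathlib

open scoped BigOperators RealInnerProductSpace
open Filter

noncomputable section

abbrev Pt (d : ℕ) := EuclideanSpace ℝ (Fin d)

def Separated {d : ℕ} (S : Finset (Pt d)) : Prop :=
  ∀ p ∈ S, ∀ q ∈ S, p ≠ q → 1 ≤ dist p q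

def IsKDistSet {d : ℕ} (k : ℕ) (S : Finset (Pt d)) : Prop :=
  ∃ D : Finset ℝ, D.card ≤ k ∧ ∀ p ∈ S, ∀ q ∈ S, p ≠ q → dist p q ∈ D

def mDist (k d : ℕ) : ℕ :=
  sSup {n : ℕ | ∃ S : Finset (Pt d), S.card = n ∧ IsKDistSet k S}

def IsNearlyKDist {d : ℕ} (k : ℕ) (ε : ℝ) (S : Finset (Pt d)) : Prop :=
  Separated S ∧ ∃ t : ℕ → ℝ, (∀ i < k, 1 ≤ t i) ∧
    ∀ p ∈ S, ∀ q ∈ S, p ≠ q → ∃ i < k, dist p q ∈ Set.Icc (t i) (t i + ε)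

def Mnear (k d : ℕ) : ℕ :=
  sSup {M : ℕ | ∀ ε : ℝ, 0 < ε → ∃ S : Finset (Pt d), S.card = M ∧ IsNearlyKDist k ε S}

def vsAngle {d : ℕ} (v : Pt d) (Λ : Submodule ℝ (Pt d)) : ℝ :=
  sInf {θ : ℝ | ∃ w ∈ Λ, w ≠ 0 ∧ θ = InnerProductGeometry.angle v w}

def IsFlatAt {d : ℕ} (S : Finset (Pt d)) (p : Pt d) (j : ℕ) (α : ℝ) : Prop :=
  ∃ Λ : Submodule ℝ (Pt d), Module.finrank ℝ Λ = j ∧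
    ∀ q ∈ S, q ≠ p → vsAngle (p - q) Λ ≤ α

def Nflat (k d' d : ℕ) : ℕ :=
  sSup {N : ℕ | ∀ ε α : ℝ, 0 < ε → 0 < α →
    ∃ S : Finset (Pt d'), S.card = N ∧ IsNearlyKDist k ε S ∧ ∀ p ∈ S, IsFlatAt S p d α}

def turanNum (n s : ℕ) : ℕ :=
  n.choose 2 - ((n % s) * (n / s + 1).choose 2 + (s - n % s) * (n / s).choose 2)

open Classical in
def nearPairs {d : ℕ} (S : Finset (Pt d)) (k : ℕ) (ε : ℝ) (t : ℕ → ℝ) :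
    Finset (Pt d × Pt d) :=
  S.offDiag.filter (fun pq => ∃ i < k, dist pq.1 pq.2 ∈ Set.Icc (t i) (t i + ε))

def Mkdn (k d n : ℕ) : ℕ :=
  sSup {M : ℕ | ∃ (S : Finset (Pt d)) (t : ℕ → ℝ), S.card = n ∧ Separated S ∧
    (∀ i < k, 1 ≤ t i) ∧ (nearPairs S k 1 t).card = 2 * M}


def Mprime (k d : ℕ) : ℕ :=
  sSup {P : ℕ | ∃ (s : ℕ) (ks ds : Fin s → ℕ), 0 < s ∧ (∀ i, 1 ≤ ks i) ∧
    (∑ i, ks i) = k ∧ (∑ i, ds i) = d ∧ P = ∏ i, mDist (ks i) (ds i)}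


open scoped Classical

def Good (k d M : ℕ) : Prop :=
  ∀ ε : ℝ, 0 < ε → ∃ S : Finset (Pt d), S.card = M ∧ IsNearlyKDist k ε S

def joinPt {d1 d2 : ℕ} (x : Pt d1) (y : Pt d2) : Pt (d1 + d2) :=
  WithLp.toLp 2 (Fin.addCases (motive := fun _ => ℝ) x y)

lemma joinPt_left {d1 d2 : ℕ} (x : Pt d1) (y : Pt d2) (i : Fin d1) :
    joinPt x y (Fin.castAdd d2 i) = x i :=
  Fin.addCases_left (motive := fun _ => ℝ) (left := x.ofLp) (right := y.ofLp) i

lemma joinPt_right {d1 d2 : ℕ} (x : Pt d1) (y : Pt d2) (i : Fin d2) :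
    joinPt x y (Fin.natAdd d1 i) = y i :=
  Fin.addCases_right (motive := fun _ => ℝ) (left := x.ofLp) (right := y.ofLp) i

lemma dist_joinPt {d1 d2 : ℕ} (x x' : Pt d1) (y y' : Pt d2) :
    dist (joinPt x y) (joinPt x' y') = Real.sqrt (dist x x' ^ 2 + dist y y' ^ 2) := by
  rw [EuclideanSpace.dist_eq, EuclideanSpace.dist_eq, EuclideanSpace.dist_eq]
  rw [Real.sq_sqrt (by positivity), Real.sq_sqrt (by positivity)]
  rw [Fin.sum_univ_add]
  simp [joinPt_left, joinPt_right]

lemma joinPt_inj {d1 d2 : ℕ} {x x' : Pt d1} {y y' : Pt d2}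
    (h : joinPt x y = joinPt x' y') : x = x' ∧ y = y' := by
  constructor
  · ext i
    have := congrFun (congrArg WithLp.ofLp h) (Fin.castAdd d2 i)
    rwa [joinPt_left, joinPt_left] at this
  · ext i
    have := congrFun (congrArg WithLp.ofLp h) (Fin.natAdd d1 i)
    rwa [joinPt_right, joinPt_right] at this

lemma exists_mDist (k d : ℕ) :
    ∃ S : Finset (Pt d), S.card = mDist k d ∧ IsKDistSet k S := by
  set Q := {n : ℕ | ∃ S : Finset (Pt d), S.card = n ∧ IsKDistSet k S} with hQ
  have h0 : (0 : ℕ) ∈ Q := ⟨∅, by simp, ⟨∅, by simp, by simp⟩⟩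
  by_cases hb : BddAbove Q
  · exact Nat.sSup_mem ⟨0, h0⟩ hb
  · have : mDist k d = 0 := by
      rw [mDist, ← hQ, csSup_of_not_bddAbove hb, csSup_empty]; rfl
    rw [this]
    exact ⟨∅, by simp, ⟨∅, by simp, by simp⟩⟩

def distSet {d : ℕ} (S : Finset (Pt d)) : Finset ℝ :=
  S.offDiag.image (fun pq => dist pq.1 pq.2)

lemma distSet_pos {d : ℕ} {S : Finset (Pt d)} {v : ℝ} (hv : v ∈ distSet S) : 0 < v := by
  simp only [distSet, Finset.mem_image, Finset.mem_offDiag] at hv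
  obtain ⟨⟨p, q⟩, ⟨_, _, hne⟩, rfl⟩ := hv
  exact dist_pos.2 hne

lemma distSet_card_le {d : ℕ} {S : Finset (Pt d)} {k : ℕ} (h : IsKDistSet k S) :
    (distSet S).card ≤ k := by
  obtain ⟨D, hD, hall⟩ := h
  refine le_trans (Finset.card_le_card ?_) hD
  intro v hv
  simp only [distSet, Finset.mem_image, Finset.mem_offDiag] at hv
  obtain ⟨⟨p, q⟩, ⟨hp, hq, hne⟩, rfl⟩ := hv
  exact hall p hp q hq hne

lemma mem_distSet {d : ℕ} {S : Finset (Pt d)} {p q : Pt d} (hp : p ∈ S) (hq : q ∈ S)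
    (hne : p ≠ q) : dist p q ∈ distSet S := by
  simp only [distSet, Finset.mem_image]
  exact ⟨(p, q), Finset.mem_offDiag.2 ⟨hp, hq, hne⟩, rfl⟩

def minDist {d : ℕ} (S : Finset (Pt d)) : ℝ :=
  if h : (distSet S).Nonempty then (distSet S).min' h else 1

lemma minDist_pos {d : ℕ} (S : Finset (Pt d)) : 0 < minDist S := by
  rw [minDist]
  split_ifs with h
  · exact distSet_pos ((distSet S).min'_mem h)
  · norm_num

lemma minDist_le {d : ℕ} {S : Finset (Pt d)} {v : ℝ} (hv : v ∈ distSet S) :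
    minDist S ≤ v := by
  rw [minDist, dif_pos ⟨v, hv⟩]
  exact Finset.min'_le _ _ hv

def tFun (c : ℝ) (l : List ℝ) (k1 : ℕ) (t1 : ℕ → ℝ) (i : ℕ) : ℝ :=
  if i < k1 then t1 i
  else if h : i - k1 < l.length then c * l[i - k1] else 1

lemma key_step {k1 d1 k2 d2 : ℕ} {M n : ℕ} (h1 : Good k1 d1 M)
    (h2 : ∃ S2 : Finset (Pt d2), S2.card = n ∧ IsKDistSet k2 S2) :
    Good (k1 + k2) (d1 + d2) (M * n) := by
  intro ε hε
  obtain ⟨S1, hS1card, hS1sep, t1, ht1ge, ht1cov⟩ := h1 ε hε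
  obtain ⟨S2, hS2card, hS2k⟩ := h2
  set T : ℝ := ∑ i ∈ Finset.range k1, (t1 i + ε) with hT
  have hterm : ∀ j ∈ Finset.range k1, (0:ℝ) ≤ t1 j + ε := by
    intro j hj
    have := ht1ge j (Finset.mem_range.1 hj); linarith
  have hTnn : 0 ≤ T := Finset.sum_nonneg hterm
  have hdiam : ∀ p ∈ S1, ∀ q ∈ S1, dist p q ≤ T := by
    intro p hp q hq
    rcases eq_or_ne p q with rfl | hne
    · simpa using hTnn
    · obtain ⟨i, hik, hmem⟩ := ht1cov p hp q hq hne
      calc dist p q ≤ t1 i + ε := hmem.2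
        _ ≤ T := Finset.single_le_sum (f := fun i => t1 i + ε) hterm
            (Finset.mem_range.2 hik)
  set m : ℝ := minDist S2 with hm
  have hmpos : 0 < m := minDist_pos S2
  set c : ℝ := (1 + T ^ 2 / (2 * ε)) / m with hc
  have hcpos : 0 < c := by
    apply div_pos _ hmpos; positivity
  have hcv : ∀ v ∈ distSet S2, 1 + T ^ 2 / (2 * ε) ≤ c * v := by
    intro v hv
    have hvm : m ≤ v := minDist_le hv
    rw [hc, div_mul_eq_mul_div, le_div_iff₀ hmpos]
    have h1T : 0 ≤ 1 + T ^ 2 / (2 * ε) := by positivity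
    nlinarith
  have hcv1 : ∀ v ∈ distSet S2, 1 ≤ c * v := by
    intro v hv
    have h2 : (0:ℝ) ≤ T ^ 2 / (2 * ε) := by positivity
    linarith [hcv v hv]
  have hcvε : ∀ v ∈ distSet S2, ∀ D : ℝ, 0 ≤ D → D ≤ T →
      Real.sqrt (D ^ 2 + (c * v) ^ 2) ≤ c * v + ε := by
    intro v hv D hD0 hDT
    have h1 : 1 ≤ c * v := hcv1 v hv
    have h2 : T ^ 2 / (2 * ε) ≤ c * v := by linarith [hcv v hv]
    have h3 : T ^ 2 ≤ 2 * ε * (c * v) := by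
      rw [div_le_iff₀ (by positivity)] at h2; linarith
    have h4 : D ^ 2 + (c * v) ^ 2 ≤ (c * v + ε) ^ 2 := by nlinarith
    calc Real.sqrt (D ^ 2 + (c * v) ^ 2) ≤ Real.sqrt ((c * v + ε) ^ 2) :=
          Real.sqrt_le_sqrt h4
      _ = c * v + ε := Real.sqrt_sq (by linarith)
  have hcvlo : ∀ v ∈ distSet S2, ∀ D : ℝ,
      c * v ≤ Real.sqrt (D ^ 2 + (c * v) ^ 2) := by
    intro v hv D
    have h1 : 1 ≤ c * v := hcv1 v hv
    calc c * v = Real.sqrt ((c * v) ^ 2) := (Real.sqrt_sq (by linarith)).symm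
      _ ≤ Real.sqrt (D ^ 2 + (c * v) ^ 2) := Real.sqrt_le_sqrt (by nlinarith)
  set l : List ℝ := (distSet S2).toList with hl
  have hllen : l.length ≤ k2 := by
    rw [hl, Finset.length_toList]; exact distSet_card_le hS2k
  set t' : ℕ → ℝ := tFun c l k1 t1 with ht'
  set f : Pt d1 × Pt d2 → Pt (d1 + d2) := fun pq => joinPt pq.1 (c • pq.2) with hf
  have hfinj : Set.InjOn f ↑(S1 ×ˢ S2) := by
    intro a _ b _ hab
    obtain ⟨h1', h2'⟩ := joinPt_inj hab
    have : a.2 = b.2 := smul_right_injective _ (ne_of_gt hcpos) h2'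
    exact Prod.ext h1' this
  have hdistf : ∀ x x' : Pt d1, ∀ y y' : Pt d2,
      dist (f (x, y)) (f (x', y')) = Real.sqrt (dist x x' ^ 2 + (c * dist y y') ^ 2) := by
    intro x x' y y'
    rw [hf]
    simp only
    rw [dist_joinPt, dist_smul₀, Real.norm_eq_abs, abs_of_pos hcpos]
  refine ⟨(S1 ×ˢ S2).image f, ?_, ?_, t', ?_, ?_⟩
  · rw [Finset.card_image_of_injOn hfinj, Finset.card_product, hS1card, hS2card]
  · -- Separated
    intro P hP Q hQ hPQ
    obtain ⟨⟨x, y⟩, hxy, rfl⟩ := Finset.mem_image.1 hP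
    obtain ⟨⟨x', y'⟩, hxy', rfl⟩ := Finset.mem_image.1 hQ
    obtain ⟨hx, hy⟩ := Finset.mem_product.1 hxy
    obtain ⟨hx', hy'⟩ := Finset.mem_product.1 hxy'
    rw [hdistf]
    rcases eq_or_ne y y' with rfl | hyne
    · have hxne : x ≠ x' := by rintro rfl; exact hPQ rfl
      have h1 : 1 ≤ dist x x' := hS1sep x hx x' hx' hxne
      rw [dist_self, mul_zero]
      rw [show dist x x' ^ 2 + (0:ℝ) ^ 2 = dist x x' ^ 2 by ring,
        Real.sqrt_sq dist_nonneg]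
      exact h1
    · have hv : dist y y' ∈ distSet S2 := mem_distSet hy hy' hyne
      exact le_trans (hcv1 _ hv) (hcvlo _ hv _)
  · -- t' bounds
    intro i hik
    rw [ht', tFun]
    split_ifs with h1 h2
    · exact ht1ge i h1
    · have hmem : l[i - k1] ∈ distSet S2 := by
        rw [← Finset.mem_toList]; exact List.getElem_mem h2
      exact hcv1 _ hmem
    · exact le_refl 1
  · -- covering
    intro P hP Q hQ hPQ
    obtain ⟨⟨x, y⟩, hxy, rfl⟩ := Finset.mem_image.1 hP
    obtain ⟨⟨x', y'⟩, hxy', rfl⟩ := Finset.mem_image.1 hQ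
    obtain ⟨hx, hy⟩ := Finset.mem_product.1 hxy
    obtain ⟨hx', hy'⟩ := Finset.mem_product.1 hxy'
    rw [hdistf]
    rcases eq_or_ne y y' with rfl | hyne
    · have hxne : x ≠ x' := by rintro rfl; exact hPQ rfl
      obtain ⟨i, hik, hmem⟩ := ht1cov x hx x' hx' hxne
      refine ⟨i, by omega, ?_⟩
      have ht'i : t' i = t1 i := by rw [ht', tFun, if_pos hik]
      rw [ht'i, dist_self, mul_zero,
        show dist x x' ^ 2 + (0:ℝ) ^ 2 = dist x x' ^ 2 by ring,
        Real.sqrt_sq dist_nonneg]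
      exact hmem
    · have hv : dist y y' ∈ distSet S2 := mem_distSet hy hy' hyne
      have hvl : dist y y' ∈ l := by rw [hl, Finset.mem_toList]; exact hv
      obtain ⟨j, hjlen, hjv⟩ := List.mem_iff_getElem.1 hvl
      refine ⟨k1 + j, by omega, ?_⟩
      have ht'j : t' (k1 + j) = c * dist y y' := by
        rw [ht', tFun, if_neg (by omega)]
        simp only [Nat.add_sub_cancel_left]
        rw [dif_pos hjlen, hjv]
      rw [ht'j]
      exact ⟨hcvlo _ hv _, hcvε _ hv _ dist_nonneg (hdiam x hx x' hx')⟩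

lemma good_base : Good 0 0 1 := by
  intro ε hε
  refine ⟨{0}, by simp, ?_, (fun _ => 1), by omega, ?_⟩
  · intro p hp q hq hne
    simp only [Finset.mem_singleton] at hp hq
    exact absurd (hp.trans hq.symm) hne
  · intro p hp q hq hne
    simp only [Finset.mem_singleton] at hp hq
    exact absurd (hp.trans hq.symm) hne

lemma prodGood (s : ℕ) (ks ds : Fin s → ℕ) :
    Good (∑ i, ks i) (∑ i, ds i) (∏ i, mDist (ks i) (ds i)) := by
  induction s with
  | zero => simpa using good_base
  | succ n ih =>
    rw [Fin.sum_univ_succ, Fin.sum_univ_succ, Fin.prod_univ_succ]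
    rw [add_comm (ks 0), add_comm (ds 0), mul_comm]
    exact key_step (ih _ _) (exists_mDist (ks 0) (ds 0))

lemma packingBound (d : ℕ) (δ : ℝ) (hδ : 0 < δ) : ∃ N : ℕ, ∀ S : Finset (Pt d),
    (∀ p ∈ S, dist p 0 ≤ 2) → (∀ p ∈ S, ∀ q ∈ S, p ≠ q → δ < dist p q) →
    S.card ≤ N := by
  obtain ⟨t, htfin, htcov⟩ := Metric.totallyBounded_iff.1
    (isCompact_closedBall (0 : Pt d) 2).totallyBounded (δ/2) (by positivity)
  refine ⟨htfin.toFinset.card, ?_⟩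
  intro S hS1 hS2
  have hfun : ∀ p : Pt d, ∃ y, p ∈ S → y ∈ t ∧ p ∈ Metric.ball y (δ/2) := by
    intro p
    by_cases hp : p ∈ S
    · have hpc : p ∈ Metric.closedBall (0 : Pt d) 2 := by
        rw [Metric.mem_closedBall]; exact hS1 p hp
      have := htcov hpc
      simp only [Set.mem_iUnion, exists_prop] at this
      obtain ⟨y, hy, hpy⟩ := this
      exact ⟨y, fun _ => ⟨hy, hpy⟩⟩
    · exact ⟨0, fun h => absurd h hp⟩
  choose g hg using hfun
  refine Finset.card_le_card_of_injOn g (fun p hp => ?_) ?_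
  · rw [Finset.mem_coe, Set.Finite.mem_toFinset]; exact (hg p hp).1
  · intro p hp q hq hpq
    by_contra hne
    have h1 := (hg p hp).2
    have h2 := (hg q hq).2
    rw [hpq] at h1
    have : dist p q < δ := by
      rw [Metric.mem_ball] at h1 h2
      calc dist p q ≤ dist p (g q) + dist (g q) q := dist_triangle _ _ _
        _ < δ/2 + δ/2 := by rw [dist_comm (g q) q]; exact add_lt_add h1 h2
        _ = δ := by ring
    exact absurd this (not_lt.2 (hS2 p hp q hq hne).le)

lemma nearlyBound (d : ℕ) : ∀ k : ℕ, ∃ N : ℕ, 1 ≤ N ∧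
    ∀ (S : Finset (Pt d)) (t : ℕ → ℝ) (I : Finset ℕ),
    I.card ≤ k → Separated S → (∀ i ∈ I, 1 ≤ t i) →
    (∀ p ∈ S, ∀ q ∈ S, p ≠ q → ∃ i ∈ I, dist p q ∈ Set.Icc (t i) (t i + 1/2)) →
    S.card ≤ N := by
  intro k
  induction k with
  | zero =>
    refine ⟨1, le_refl 1, ?_⟩
    intro S t I hI hsep htge hcov
    rw [Finset.card_le_one]
    intro a ha b hb
    by_contra hne
    obtain ⟨i, hi, _⟩ := hcov a ha b hb hne
    have : I = ∅ := Finset.card_eq_zero.1 (Nat.le_zero.1 hI)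
    simp [this] at hi
  | succ k ih =>
    obtain ⟨Nk, hNk1, hNk⟩ := ih
    set δ : ℝ := 1 / 100 ^ (k + 1) with hδdef
    have hδ : 0 < δ := by positivity
    obtain ⟨Np, hNp⟩ := packingBound d δ hδ
    refine ⟨max 1 (max Np (Nk * Nk)), le_max_left _ _, ?_⟩
    intro S t I hI hsep htge hcov
    by_cases hS1 : S.card ≤ 1
    · exact le_trans hS1 (le_max_left _ _)
    push_neg at hS1
    obtain ⟨p0, hp0, q0, hq0, hpq0⟩ := Finset.one_lt_card.1 hS1
    obtain ⟨iw, hiw, _⟩ := hcov p0 hp0 q0 hq0 hpq0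
    have hIne : I.Nonempty := ⟨iw, hiw⟩
    set T : ℝ := I.sup' hIne t with hTdef
    obtain ⟨imax, himax, hTmax⟩ := Finset.exists_mem_eq_sup' hIne t
    have htleT : ∀ i ∈ I, t i ≤ T := fun i hi => Finset.le_sup' t hi
    have hT1 : 1 ≤ T := le_trans (htge iw hiw) (htleT iw hiw)
    have hT0 : 0 < T := by linarith
    have hdistle : ∀ p ∈ S, ∀ q ∈ S, dist p q ≤ 2 * T := by
      intro p hp q hq
      rcases eq_or_ne p q with rfl | hne
      · rw [dist_self]; linarith
      · obtain ⟨i, hi, hmem⟩ := hcov p hp q hq hne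
        have := htleT i hi
        have := hmem.2
        have : dist p q ≤ t i + 1/2 := hmem.2
        linarith [htleT i hi]
    -- monotonicity helper
    have hmono : ∀ a b : ℕ, a ≤ b → T / 100 ^ b ≤ T / 100 ^ a := by
      intro a b hab
      apply div_le_div_of_nonneg_left hT0.le (by positivity)
      exact pow_le_pow_right₀ (by norm_num) hab
    by_cases hA : ∀ i ∈ I, T / 100 ^ (k + 1) < t i
    · -- packing case
      set ψ : Pt d → Pt d := fun p => (1 / T) • (p - p0) with hψ
      have hψinj : Set.InjOn ψ ↑S := by
        intro a _ b _ hab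
        rw [hψ] at hab
        simp only at hab
        have := smul_right_injective (Pt d) (by positivity : (1:ℝ)/T ≠ 0) hab
        exact sub_left_injective this
      have hψdist : ∀ p q : Pt d, dist (ψ p) (ψ q) = (1 / T) * dist p q := by
        intro p q
        rw [hψ]
        simp only
        rw [dist_smul₀, Real.norm_eq_abs, abs_of_pos (by positivity)]
        congr 1
        rw [dist_eq_norm, dist_eq_norm]
        congr 1
        abel
      have hcard : S.card = (S.image ψ).card := (Finset.card_image_of_injOn hψinj).symm
      rw [hcard]
      refine le_trans (hNp (S.image ψ) ?_ ?_) (le_trans (le_max_left _ _) (le_max_right _ _))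
      · intro p' hp'
        obtain ⟨p, hp, rfl⟩ := Finset.mem_image.1 hp'
        have : ψ p0 = 0 := by rw [hψ]; simp
        rw [← this, hψdist]
        have := hdistle p hp p0 hp0
        rw [div_mul_eq_mul_div, div_le_iff₀ hT0]
        linarith
      · intro p' hp' q' hq' hne'
        obtain ⟨p, hp, rfl⟩ := Finset.mem_image.1 hp'
        obtain ⟨q, hq, rfl⟩ := Finset.mem_image.1 hq'
        have hpq : p ≠ q := by rintro rfl; exact hne' rfl
        obtain ⟨i, hi, hmem⟩ := hcov p hp q hq hpq
        have h1 : T / 100 ^ (k + 1) < dist p q := lt_of_lt_of_le (hA i hi) hmem.1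
        rw [hψdist, hδdef]
        have h2 : 1 / T * (T / 100 ^ (k+1)) < 1 / T * dist p q :=
          mul_lt_mul_of_pos_left h1 (by positivity)
        have h3 : 1 / T * (T / 100 ^ (k+1)) = 1 / 100 ^ (k+1) := by field_simp
        linarith
    · -- gap case
      push_neg at hA
      obtain ⟨i0, hi0I, hi0⟩ := hA
      have hTimax : T = t imax := hTdef.trans hTmax
      have hpow1 : ∀ m : ℕ, m ≠ 0 → (1:ℝ) < 100 ^ m := fun m hm =>
        one_lt_pow₀ (by norm_num) hm
      have hdivlt : ∀ m : ℕ, m ≠ 0 → T / 100 ^ m < T := by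
        intro m hm
        rw [div_lt_iff₀ (by positivity)]
        nlinarith [hpow1 m hm]
      have hi0ne : i0 ≠ imax := by
        intro h
        rw [h, ← hTimax] at hi0
        linarith [hdivlt (k+1) (Nat.succ_ne_zero k)]
      have hIcard2 : 1 < I.card := Finset.one_lt_card.2 ⟨i0, hi0I, imax, himax, hi0ne⟩
      -- find empty band
      have hgap : ∃ j ∈ Finset.Icc 1 k, ∀ i ∈ I,
          ¬(T / 100 ^ (j + 1) < t i ∧ t i ≤ T / 100 ^ j) := by
        by_contra hcon
        push_neg at hcon
        have hcon' : ∀ j : ℕ, ∃ i, j ∈ Finset.Icc 1 k →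
            (i ∈ I ∧ T / 100 ^ (j + 1) < t i ∧ t i ≤ T / 100 ^ j) := by
          intro j
          by_cases hj : j ∈ Finset.Icc 1 k
          · obtain ⟨i, hiI, h⟩ := hcon j hj
            exact ⟨i, fun _ => ⟨hiI, h⟩⟩
          · exact ⟨0, fun h => absurd h hj⟩
        choose φ hφ using hcon'
        have hkey : ∀ a ∈ Finset.Icc 1 k, ∀ b ∈ Finset.Icc 1 k, a < b → φ a ≠ φ b := by
          intro a ha b hb hab heq
          have h1 := (hφ a ha).2.1
          have h2 := (hφ b hb).2.2
          rw [heq] at h1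
          have : T / 100 ^ b ≤ T / 100 ^ (a + 1) := hmono _ _ hab
          linarith
        have hinj : Set.InjOn φ ↑(Finset.Icc 1 k) := by
          intro a ha b hb heq
          by_contra hne
          rcases Nat.lt_or_ge a b with h | h
          · exact hkey a ha b hb h heq
          · have hba : b < a := by omega
            exact hkey b hb a ha hba heq.symm
        have hmaps : ∀ j ∈ Finset.Icc 1 k,
            φ j ∈ I.filter (fun i => T / 100 ^ (k + 1) < t i ∧ t i ≤ T / 100) := by
          intro j hj
          obtain ⟨hjI, hj1, hj2⟩ := hφ j hj
          rw [Finset.mem_Icc] at hj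
          refine Finset.mem_filter.2 ⟨hjI, lt_of_le_of_lt (hmono _ _ (by omega)) hj1,
            le_trans hj2 ?_⟩
          have := hmono 1 j hj.1
          simpa using this
        have hcard1 := Finset.card_le_card_of_injOn φ hmaps hinj
        have hsub : I.filter (fun i => T / 100 ^ (k + 1) < t i ∧ t i ≤ T / 100) ⊆
            (I.erase i0).erase imax := by
          intro i hi
          obtain ⟨hiI, h1, h2⟩ := Finset.mem_filter.1 hi
          refine Finset.mem_erase.2 ⟨?_, Finset.mem_erase.2 ⟨?_, hiI⟩⟩
          · intro h
            rw [h, ← hTimax] at h2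
            have : T / 100 < T := by
              have := hdivlt 1 one_ne_zero
              simpa using this
            linarith
          · intro h
            rw [h] at h1
            linarith
        have hcard2 := Finset.card_le_card hsub
        have hcard3 : ((I.erase i0).erase imax).card = I.card - 1 - 1 := by
          rw [Finset.card_erase_of_mem (Finset.mem_erase.2 ⟨hi0ne.symm, himax⟩),
            Finset.card_erase_of_mem hi0I]
        rw [Nat.card_Icc] at hcard1
        omega
      obtain ⟨j, hjIcc, hjgap⟩ := hgap
      rw [Finset.mem_Icc] at hjIcc
      set θ : ℝ := T / 100 ^ (j + 1) with hθdef
      have hθ1 : 1 ≤ θ := by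
        have h1 : t i0 ≤ θ := le_trans hi0 (hmono _ _ (by omega))
        linarith [htge i0 hi0I]
      have hθ0 : 0 < θ := by linarith
      have h100θ : T / 100 ^ j = 100 * θ := by
        rw [hθdef, pow_succ]
        field_simp
      have halt : ∀ i ∈ I, t i ≤ θ ∨ 100 * θ < t i := by
        intro i hi
        have := hjgap i hi
        rw [← h100θ]
        by_cases h : t i ≤ θ
        · exact Or.inl h
        · right
          rw [not_and'] at this
          push_neg at h
          rcases le_or_gt (t i) (T / 100 ^ j) with h2 | h2
          · exact absurd ⟨h, h2⟩ (hjgap i hi)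
          · exact h2
      have hTgt : 100 * θ < T := by
        rcases halt imax himax with h | h
        · rw [← hTimax] at h
          have : θ < T := hdivlt (j+1) (Nat.succ_ne_zero j)
          linarith
        · rwa [hTimax]
      -- all distances ≤ 2θ or > 100θ, and low distances have low witnesses
      have hlowwit : ∀ p ∈ S, ∀ q ∈ S, p ≠ q → dist p q ≤ 2 * θ →
          ∃ i ∈ I, t i ≤ θ ∧ dist p q ∈ Set.Icc (t i) (t i + 1/2) := by
        intro p hp q hq hne hle
        obtain ⟨i, hi, hmem⟩ := hcov p hp q hq hne
        refine ⟨i, hi, ?_, hmem⟩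
        rcases halt i hi with h | h
        · exact h
        · exfalso
          have := hmem.1
          linarith
      have hdistalt : ∀ p ∈ S, ∀ q ∈ S, p ≠ q → dist p q ≤ 2 * θ ∨ 100 * θ < dist p q := by
        intro p hp q hq hne
        obtain ⟨i, hi, hmem⟩ := hcov p hp q hq hne
        rcases halt i hi with h | h
        · left; linarith [hmem.2]
        · right; linarith [hmem.1]
      have hkey2 : ∀ p ∈ S, ∀ r ∈ S, dist p r ≤ 4 * θ → dist p r ≤ 2 * θ := by
        intro p hp r hr h4
        rcases eq_or_ne p r with rfl | hne
        · rw [dist_self]; linarith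
        · rcases hdistalt p hp r hr hne with h | h
          · exact h
          · linarith
      set φcl : Pt d → Finset (Pt d) := fun p => S.filter (fun q => dist p q ≤ 2 * θ)
        with hφcl
      have hself : ∀ p ∈ S, p ∈ φcl p := by
        intro p hp
        rw [hφcl]
        exact Finset.mem_filter.2 ⟨hp, by rw [dist_self]; linarith⟩
      have hmemcl : ∀ p x, x ∈ φcl p ↔ (x ∈ S ∧ dist p x ≤ 2 * θ) := by
        intro p x
        rw [hφcl]
        exact Finset.mem_filter
      have hclass_eq : ∀ p ∈ S, ∀ x ∈ S, dist p x ≤ 2 * θ → φcl p = φcl x := by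
        intro p hp x hx hpx
        ext r
        rw [hmemcl, hmemcl]
        constructor
        · rintro ⟨hr, hdr⟩
          refine ⟨hr, hkey2 x hx r hr ?_⟩
          calc dist x r ≤ dist x p + dist p r := dist_triangle _ _ _
            _ ≤ 4 * θ := by rw [dist_comm x p]; linarith
        · rintro ⟨hr, hdr⟩
          refine ⟨hr, hkey2 p hp r hr ?_⟩
          calc dist p r ≤ dist p x + dist x r := dist_triangle _ _ _
            _ ≤ 4 * θ := by linarith
      -- fibers bounded
      have hfiber : ∀ C ∈ S.image φcl, (S.filter (fun a => φcl a = C)).card ≤ Nk := by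
        intro C hC
        obtain ⟨p₀, hp₀, rfl⟩ := Finset.mem_image.1 hC
        have hsubfib : S.filter (fun a => φcl a = φcl p₀) ⊆ φcl p₀ := by
          intro a ha
          obtain ⟨haS, hae⟩ := Finset.mem_filter.1 ha
          rw [← hae]
          exact hself a haS
        refine le_trans (Finset.card_le_card hsubfib) ?_
        refine hNk (φcl p₀) t (I.filter (fun i => t i ≤ θ)) ?_ ?_ ?_ ?_
        · have hsub2 : I.filter (fun i => t i ≤ θ) ⊆ I.erase imax := by
            intro i hi
            obtain ⟨hiI, hit⟩ := Finset.mem_filter.1 hi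
            refine Finset.mem_erase.2 ⟨?_, hiI⟩
            intro h
            rw [h, ← hTimax] at hit
            linarith
          have := Finset.card_le_card hsub2
          rw [Finset.card_erase_of_mem himax] at this
          omega
        · intro p hp q hq hne
          exact hsep p ((hmemcl _ _).1 hp).1 q ((hmemcl _ _).1 hq).1 hne
        · intro i hi
          exact htge i (Finset.mem_filter.1 hi).1
        · intro p hp q hq hne
          obtain ⟨hpS, hpd⟩ := (hmemcl _ _).1 hp
          obtain ⟨hqS, hqd⟩ := (hmemcl _ _).1 hq
          have h4 : dist p q ≤ 4 * θ := by
            calc dist p q ≤ dist p p₀ + dist p₀ q := dist_triangle _ _ _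
              _ ≤ 4 * θ := by rw [dist_comm p p₀]; linarith
          obtain ⟨i, hiI, hit, hmem⟩ := hlowwit p hpS q hqS hne (hkey2 p hpS q hqS h4)
          exact ⟨i, Finset.mem_filter.2 ⟨hiI, hit⟩, hmem⟩
      -- image bounded
      set g : Finset (Pt d) → Pt d := fun C => if h : C.Nonempty then h.choose else 0
        with hg
      have hgmem : ∀ C : Finset (Pt d), C.Nonempty → g C ∈ C := by
        intro C hC
        rw [hg]
        simp only [dif_pos hC]
        exact hC.choose_spec
      have hCne : ∀ C ∈ S.image φcl, C.Nonempty := by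
        intro C hC
        obtain ⟨p, hp, rfl⟩ := Finset.mem_image.1 hC
        exact ⟨p, hself p hp⟩
      have hclg : ∀ p ∈ S, φcl p = φcl (g (φcl p)) := by
        intro p hp
        have hx : g (φcl p) ∈ φcl p := hgmem _ ⟨p, hself p hp⟩
        obtain ⟨hxS, hxd⟩ := (hmemcl _ _).1 hx
        exact hclass_eq p hp _ hxS hxd
      have hginj : Set.InjOn g ↑(S.image φcl) := by
        intro C hC C' hC' heq
        obtain ⟨p, hp, rfl⟩ := Finset.mem_image.1 (by exact_mod_cast hC)
        obtain ⟨q, hq, rfl⟩ := Finset.mem_image.1 (by exact_mod_cast hC')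
        rw [hclg p hp, hclg q hq, heq]
      have himg : (S.image φcl).card ≤ Nk := by
        rw [← Finset.card_image_of_injOn hginj]
        set R := (S.image φcl).image g with hR
        have hRsub : R ⊆ S := by
          intro x hx
          obtain ⟨C, hC, rfl⟩ := Finset.mem_image.1 hx
          have := hgmem C (hCne C hC)
          obtain ⟨p, hp, rfl⟩ := Finset.mem_image.1 hC
          exact ((hmemcl _ _).1 this).1
        refine hNk R t (I.filter (fun i => 100 * θ < t i)) ?_ ?_ ?_ ?_
        · have hsub2 : I.filter (fun i => 100 * θ < t i) ⊆ I.erase i0 := by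
            intro i hi
            obtain ⟨hiI, hit⟩ := Finset.mem_filter.1 hi
            refine Finset.mem_erase.2 ⟨?_, hiI⟩
            intro h
            rw [h] at hit
            have : t i0 ≤ θ := le_trans hi0 (hmono _ _ (by omega))
            linarith
          have := Finset.card_le_card hsub2
          rw [Finset.card_erase_of_mem hi0I] at this
          omega
        · intro p hp q hq hne
          exact hsep p (hRsub hp) q (hRsub hq) hne
        · intro i hi
          exact htge i (Finset.mem_filter.1 hi).1
        · intro x hx y hy hne
          have hxS := hRsub hx
          have hyS := hRsub hy
          have hfar : ¬(dist x y ≤ 2 * θ) := by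
            intro hle
            obtain ⟨Cx, hCx, hgx⟩ := Finset.mem_image.1 hx
            obtain ⟨Cy, hCy, hgy⟩ := Finset.mem_image.1 hy
            obtain ⟨p, hp, rfl⟩ := Finset.mem_image.1 hCx
            obtain ⟨q, hq, rfl⟩ := Finset.mem_image.1 hCy
            have e1 : φcl p = φcl x := by rw [← hgx]; exact hclg p hp
            have e2 : φcl q = φcl y := by rw [← hgy]; exact hclg q hq
            have e3 : φcl x = φcl y := hclass_eq x hxS y hyS hle
            have : φcl p = φcl q := by rw [e1, e3, ← e2]
            apply hne
            rw [← hgx, ← hgy, this]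
          obtain ⟨i, hiI, hmem⟩ := hcov x hxS y hyS hne
          refine ⟨i, Finset.mem_filter.2 ⟨hiI, ?_⟩, hmem⟩
          rcases halt i hiI with h | h
          · exfalso
            apply hfar
            linarith [hmem.2]
          · exact h
      calc S.card ≤ Nk * (S.image φcl).card :=
            Finset.card_le_mul_card_image S Nk hfiber
        _ ≤ Nk * Nk := Nat.mul_le_mul_left Nk himg
        _ ≤ max 1 (max Np (Nk * Nk)) := le_trans (le_max_right _ _) (le_max_right _ _)

lemma bddMnearSet (k d : ℕ) : BddAbove {M : ℕ | ∀ ε : ℝ, 0 < ε →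
    ∃ S : Finset (Pt d), S.card = M ∧ IsNearlyKDist k ε S} := by
  obtain ⟨N, hN1, hN⟩ := nearlyBound d k
  refine ⟨N, fun M hM => ?_⟩
  obtain ⟨S, hcard, hsep, t, htge, htcov⟩ := hM (1/2) (by norm_num)
  rw [← hcard]
  refine hN S t (Finset.range k) (by simp) hsep
    (fun i hi => htge i (Finset.mem_range.1 hi)) ?_
  intro p hp q hq hne
  obtain ⟨i, hik, h⟩ := htcov p hp q hq hne
  exact ⟨i, Finset.mem_range.2 hik, h⟩

theorem stmt5 (k d : ℕ) (hk : 1 ≤ k) (hd : 1 ≤ d) :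
    Mprime k d ≤ Mnear k d := by
  apply csSup_le'
  rintro P ⟨s, ks, ds, hs, hks, hsum, hdsum, rfl⟩
  have hgood : Good k d (∏ i, mDist (ks i) (ds i)) := by
    have := prodGood s ks ds
    rwa [hsum, hdsum] at this
  exact le_csSup (bddMnearSet k d) hgood

end
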